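/- Let α be irrational, Π_Y((m,n)) = n - αm the projection of ℤ² along the line of slope α, and let Ω = [t, t+ℓ) with ℓ > 0 be a half-open window. Consider the set S = {z ∈ ℤ² : Π_Y(z) ∈ Ω} of lattice points in the strip. Projecting S along the second line W (transversal to V and the axes) to V yields a point set whose consecutive gaps take at most three distinct values, and if there are three values one of them equals the sum of the other two. -/

import Mathlib

/-- Projection to the vertical axis `Y` along the line `V = {(x, αx)}`. -/
noncomputable def projY (α : ℝ) (p : Fin 2 → ℝ) : ℝ := p 1 - α * p 0

/-- Coordinate on the line `V = {(x, αx)}` of the projection along the line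
`W = {(x, βx)}`. -/
noncomputable def projV (α β : ℝ) (p : Fin 2 → ℝ) : ℝ := (p 1 - β * p 0) / (α - β)

namespace ThreeDistAux

/-- The `Y`-projection value of an integer step vector. -/
noncomputable def py (α : ℝ) (c : ℤ × ℤ) : ℝ := (c.2 : ℝ) - α * (c.1 : ℝ)

/-- The `V`-coordinate value of an integer step vector. -/
noncomputable def pv (α β : ℝ) (c : ℤ × ℤ) : ℝ := ((c.2 : ℝ) - β * (c.1 : ℝ)) / (α - β)

lemma py_sub (α : ℝ) (c d : ℤ × ℤ) : py α (c - d) = py α c - py α d := by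
  simp only [py, Prod.fst_sub, Prod.snd_sub]; push_cast; ring

lemma py_add (α : ℝ) (c d : ℤ × ℤ) : py α (c + d) = py α c + py α d := by
  simp only [py, Prod.fst_add, Prod.snd_add]; push_cast; ring

lemma pv_sub (α β : ℝ) (c d : ℤ × ℤ) : pv α β (c - d) = pv α β c - pv α β d := by
  simp only [pv, Prod.fst_sub, Prod.snd_sub]; push_cast; ring

lemma pv_add (α β : ℝ) (c d : ℤ × ℤ) : pv α β (c + d) = pv α β c + pv α β d := by
  simp only [pv, Prod.fst_add, Prod.snd_add]; push_cast; ring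

lemma pv_eq (α β : ℝ) (h : α ≠ β) (c : ℤ × ℤ) :
    pv α β c = py α c / (α - β) + (c.1 : ℝ) := by
  have hγ : α - β ≠ 0 := sub_ne_zero.mpr h
  rw [pv, py, div_add' _ _ _ hγ]
  congr 1; ring

lemma irrational_comb {α : ℝ} (hα : Irrational α) {m n : ℤ} (hm : m ≠ 0) :
    Irrational ((n : ℝ) - α * m) := by
  have h1 : Irrational (α * m) := hα.mul_intCast hm
  exact h1.intCast_sub n

lemma int_mul_ne {x : ℝ} (hx : Irrational x) {k j : ℤ} (hk : k ≠ 0) : (k : ℝ) * x ≠ (j : ℝ) := by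
  intro h
  apply hx
  refine ⟨(j : ℚ) / (k : ℚ), ?_⟩
  have hk' : (k : ℝ) ≠ 0 := Int.cast_ne_zero.mpr hk
  push_cast
  field_simp
  linarith [h]

/-- Density of `ℤ + αℤ` near `0⁺`, with a positive coefficient on `α`. -/
lemma exists_pos_coeff_small {α : ℝ} (hα : Irrational α) {ε : ℝ} (hε : 0 < ε) :
    ∃ m n : ℤ, 0 < m ∧ 0 < (n : ℝ) - α * m ∧ (n : ℝ) - α * m < ε := by
  -- the subgroup of combinations
  set G : AddSubgroup ℝ :=
    { carrier := {x : ℝ | ∃ m n : ℤ, x = (n : ℝ) - α * m}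
      add_mem' := by
        rintro x y ⟨mx, nx, rfl⟩ ⟨my, ny, rfl⟩
        exact ⟨mx + my, nx + ny, by push_cast; ring⟩
      zero_mem' := ⟨0, 0, by simp⟩
      neg_mem' := by
        rintro x ⟨m, n, rfl⟩
        exact ⟨-m, -n, by push_cast; ring⟩ } with hG
  have hd : Dense (G : Set ℝ) := by
    rcases G.dense_or_cyclic with h | ⟨g, hg⟩
    · exact h
    · exfalso
      have h1 : (1 : ℝ) ∈ G := ⟨0, 1, by simp⟩
      have h2 : -α ∈ G := ⟨1, 0, by simp⟩
      rw [hg] at h1 h2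
      rw [AddSubgroup.mem_closure_singleton] at h1 h2
      obtain ⟨p, hp⟩ := h1
      obtain ⟨q, hq⟩ := h2
      have hp0 : p ≠ 0 := by
        rintro rfl; simp at hp
      apply hα
      refine ⟨-((q : ℚ) / (p : ℚ)), ?_⟩
      have hpR : (p : ℝ) ≠ 0 := Int.cast_ne_zero.mpr hp0
      rw [zsmul_eq_mul] at hp hq
      have hq' : (q : ℝ) = -α * p := by
        calc (q : ℝ) = (q : ℝ) * ((p : ℝ) * g) := by rw [hp]; ring
          _ = ((q : ℝ) * g) * p := by ring
          _ = -α * p := by rw [hq]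
      push_cast
      rw [hq']
      field_simp
  -- get a small positive element
  set ε₁ : ℝ := min ε 1 with hε₁
  have hε₁0 : 0 < ε₁ := lt_min hε zero_lt_one
  obtain ⟨x, hxG, hx⟩ : ∃ x ∈ (G : Set ℝ), x ∈ Set.Ioo (0 : ℝ) ε₁ := by
    have := hd.exists_mem_open isOpen_Ioo (Set.nonempty_Ioo.mpr hε₁0)
    tauto
  obtain ⟨m₀, n₀, rfl⟩ := hxG
  set x : ℝ := (n₀ : ℝ) - α * m₀ with hxdef
  have hx0 : 0 < x := hx.1
  have hx1 : x < 1 := lt_of_lt_of_le hx.2 (min_le_right _ _)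
  have hxε : x < ε := lt_of_lt_of_le hx.2 (min_le_left _ _)
  have hm₀ : m₀ ≠ 0 := by
    rintro rfl
    have : x = (n₀ : ℝ) := by rw [hxdef]; push_cast; ring
    rw [this] at hx0 hx1
    have h1 : (0 : ℤ) < n₀ := by exact_mod_cast hx0
    have h2 : n₀ < (1 : ℤ) := by exact_mod_cast hx1
    omega
  have hxirr : Irrational x := irrational_comb hα hm₀
  rcases lt_or_gt_of_ne hm₀ with hneg | hpos
  · -- flip the sign of the coefficient using 1 - ⌊1/x⌋ x
    set k : ℤ := ⌊1 / x⌋ with hk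
    have hk1 : 1 ≤ k := by
      rw [hk, Int.le_floor]
      push_cast
      rw [le_div_iff₀ hx0]
      linarith
    have hkx_le : (k : ℝ) * x ≤ 1 := by
      have : (k : ℝ) ≤ 1 / x := Int.floor_le _
      calc (k : ℝ) * x ≤ (1 / x) * x := by nlinarith
        _ = 1 := by field_simp
    have hkx_ne : (k : ℝ) * x ≠ 1 := by
      have := int_mul_ne hxirr (k := k) (j := 1) (by omega)
      simpa using this
    have hkx_lt : (k : ℝ) * x < 1 := lt_of_le_of_ne hkx_le hkx_ne
    have hkx_gt : 1 < ((k : ℝ) + 1) * x := by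
      have : 1 / x < (k : ℝ) + 1 := Int.lt_floor_add_one _
      calc (1 : ℝ) = (1 / x) * x := by field_simp
        _ < ((k : ℝ) + 1) * x := by nlinarith
    refine ⟨-k * m₀, 1 - k * n₀, ?_, ?_, ?_⟩
    · have h1 : (0 : ℤ) < k := by omega
      have h2 : (0 : ℤ) < -m₀ := by omega
      nlinarith
    · have heq : ((1 - k * n₀ : ℤ) : ℝ) - α * ((-k * m₀ : ℤ) : ℝ) = 1 - (k : ℝ) * x := by
        rw [hxdef]; push_cast; ring
      rw [heq]; linarith
    · have heq : ((1 - k * n₀ : ℤ) : ℝ) - α * ((-k * m₀ : ℤ) : ℝ) = 1 - (k : ℝ) * x := by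
        rw [hxdef]; push_cast; ring
      rw [heq]
      have : 1 - (k : ℝ) * x < x := by nlinarith
      linarith
  · exact ⟨m₀, n₀, hpos, hx0, hxε⟩

/-- For any bound `M` and any `ℓ > 0` there are integer vectors with arbitrarily large first
coordinate whose `Y`-value lies in `(0, ℓ)`, resp. in `(-ℓ, 0)`. -/
lemma exists_step {α : ℝ} (hα : Irrational α) (M ℓ : ℝ) (hℓ : 0 < ℓ) :
    (∃ m n : ℤ, M < (m : ℝ) ∧ 0 < (n : ℝ) - α * m ∧ (n : ℝ) - α * m < ℓ) ∧
    (∃ m n : ℤ, M < (m : ℝ) ∧ -ℓ < (n : ℝ) - α * m ∧ (n : ℝ) - α * m < 0) := by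
  obtain ⟨m₁, n₁, hm₁, hx0, hx1⟩ := exists_pos_coeff_small hα (lt_min hℓ zero_lt_one)
  set x : ℝ := (n₁ : ℝ) - α * m₁ with hxdef
  have hxl : x < ℓ := lt_of_lt_of_le hx1 (min_le_left _ _)
  have hx_lt1 : x < 1 := lt_of_lt_of_le hx1 (min_le_right _ _)
  have hxirr : Irrational x := irrational_comb hα (by omega)
  set j : ℤ := max (⌈M⌉ + 2) 2 with hj
  have hj2 : 2 ≤ j := le_max_right _ _
  have hjM : M + 1 < (j : ℝ) := by
    have : (⌈M⌉ : ℤ) + 2 ≤ j := le_max_left _ _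
    have h1 : M ≤ (⌈M⌉ : ℝ) := Int.le_ceil M
    have h2 : ((⌈M⌉ + 2 : ℤ) : ℝ) ≤ (j : ℝ) := by exact_mod_cast this
    push_cast at h2
    linarith
  set k : ℤ := ⌈(j : ℝ) / x⌉ with hk
  have hjx : (j : ℝ) ≤ (k : ℝ) * x := by
    have : (j : ℝ) / x ≤ (k : ℝ) := Int.le_ceil _
    calc (j : ℝ) = ((j : ℝ) / x) * x := by field_simp
      _ ≤ (k : ℝ) * x := by nlinarith
  have hkj : (j : ℝ) ≤ (k : ℝ) := by
    have h1 : (j : ℝ) / x ≤ k := Int.le_ceil _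
    have hj2R : (2 : ℝ) ≤ (j : ℝ) := by exact_mod_cast hj2
    have h2 : (j : ℝ) ≤ (j : ℝ) / x := by
      rw [le_div_iff₀ hx0]
      nlinarith [hj2R, hx_lt1, hx0]
    linarith
  have hk0 : k ≠ 0 := by
    have : (2 : ℝ) ≤ (k : ℝ) := le_trans (by exact_mod_cast hj2) hkj
    intro h; rw [h] at this; norm_num at this
  have hjx_ne : (k : ℝ) * x ≠ (j : ℝ) := int_mul_ne hxirr hk0
  have hjx_lt : (j : ℝ) < (k : ℝ) * x := lt_of_le_of_ne hjx (Ne.symm hjx_ne)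
  have hjx_ub : (k : ℝ) * x < (j : ℝ) + x := by
    have : (k : ℝ) < (j : ℝ) / x + 1 := Int.ceil_lt_add_one _
    calc (k : ℝ) * x < ((j : ℝ) / x + 1) * x := by nlinarith
      _ = (j : ℝ) + x := by field_simp
  have hm₁R : (1 : ℝ) ≤ (m₁ : ℝ) := by exact_mod_cast hm₁
  constructor
  · refine ⟨k * m₁, k * n₁ - j, ?_, ?_, ?_⟩
    · have hj2R : (2 : ℝ) ≤ (j : ℝ) := by exact_mod_cast hj2
      have : (j : ℝ) ≤ ((k * m₁ : ℤ) : ℝ) := by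
        push_cast
        nlinarith [hkj, hjM, hm₁R, hj2R]
      linarith
    · have heq : ((k * n₁ - j : ℤ) : ℝ) - α * ((k * m₁ : ℤ) : ℝ) = (k : ℝ) * x - j := by
        rw [hxdef]; push_cast; ring
      rw [heq]; linarith
    · have heq : ((k * n₁ - j : ℤ) : ℝ) - α * ((k * m₁ : ℤ) : ℝ) = (k : ℝ) * x - j := by
        rw [hxdef]; push_cast; ring
      rw [heq]; linarith
  · refine ⟨(k - 1) * m₁, (k - 1) * n₁ - j, ?_, ?_, ?_⟩
    · have hj2R : (2 : ℝ) ≤ (j : ℝ) := by exact_mod_cast hj2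
      have : (j : ℝ) - 1 ≤ (((k - 1) * m₁ : ℤ) : ℝ) := by
        push_cast
        nlinarith [hkj, hjM, hm₁R, hj2R]
      linarith
    · have heq : (((k - 1) * n₁ - j : ℤ) : ℝ) - α * (((k - 1) * m₁ : ℤ) : ℝ)
          = ((k : ℝ) * x - j) - x := by
        rw [hxdef]; push_cast; ring
      rw [heq]; linarith
    · have heq : (((k - 1) * n₁ - j : ℤ) : ℝ) - α * (((k - 1) * m₁ : ℤ) : ℝ)
          = ((k : ℝ) * x - j) - x := by
        rw [hxdef]; push_cast; ring
      rw [heq]; linarith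

lemma finite_of_bounded (P : Set (ℤ × ℤ)) (Rm Rn : ℝ)
    (h : ∀ c ∈ P, |(c.1 : ℝ)| ≤ Rm ∧ |(c.2 : ℝ)| ≤ Rn) : P.Finite := by
  apply Set.Finite.subset ((Set.finite_Icc (-⌈Rm⌉) ⌈Rm⌉).prod (Set.finite_Icc (-⌈Rn⌉) ⌈Rn⌉))
  rintro ⟨m, n⟩ hc
  obtain ⟨h1, h2⟩ := h _ hc
  rw [abs_le] at h1 h2
  constructor
  · constructor
    · have : -(⌈Rm⌉ : ℝ) ≤ (m : ℝ) := le_trans (by linarith [Int.le_ceil Rm]) h1.1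
      exact_mod_cast this
    · have : (m : ℝ) ≤ (⌈Rm⌉ : ℝ) := le_trans h1.2 (Int.le_ceil Rm)
      exact_mod_cast this
  · constructor
    · have : -(⌈Rn⌉ : ℝ) ≤ (n : ℝ) := le_trans (by linarith [Int.le_ceil Rn]) h2.1
      exact_mod_cast this
    · have : (n : ℝ) ≤ (⌈Rn⌉ : ℝ) := le_trans h2.2 (Int.le_ceil Rn)
      exact_mod_cast this

end ThreeDistAux

open ThreeDistAux in
/-- Three-distance property: projecting the lattice points of the strip
`{z ∈ ℤ² : Π_Y z ∈ [t, t+L)}` to `V` along `W` yields a point set whose gaps to the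
right nearest neighbour take at most three values `d₁, d₂, d₁+d₂`. -/
theorem three_distance_interval_projection
    (α β t L : ℝ) (hα : Irrational α) (hαβ : α ≠ β) (hα0 : α ≠ 0) (hβ0 : β ≠ 0)
    (hL : 0 < L)
    (S : Set (Fin 2 → ℤ))
    (hS : S = {z : Fin 2 → ℤ | projY α (fun i => (z i : ℝ)) ∈ Set.Ico t (t + L)}) :
    ∃ d₁ d₂ : ℝ, 0 < d₁ ∧ 0 < d₂ ∧
      ∀ z ∈ S, ∃ g ∈ ({d₁, d₂, d₁ + d₂} : Set ℝ),
        IsLeast {u : ℝ | 0 < u ∧ ∃ w ∈ S,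
          projV α β (fun i => (w i : ℝ)) = projV α β (fun i => (z i : ℝ)) + u} g := by
  have hγ : α - β ≠ 0 := sub_ne_zero.mpr hαβ
  have hγ0 : 0 < |α - β| := abs_pos.mpr hγ
  -- the two half-strips of step vectors
  set A₀ : Set (ℤ × ℤ) := {c | (-L < py α c ∧ py α c < 0) ∧ 0 < pv α β c} with hA₀
  set B₀ : Set (ℤ × ℤ) := {c | (0 ≤ py α c ∧ py α c < L) ∧ 0 < pv α β c} with hB₀
  -- both are nonempty
  have hpv_pos : ∀ c : ℤ × ℤ, |py α c| ≤ 1 → 1 / |α - β| < (c.1 : ℝ) → 0 < pv α β c := by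
    intro c h1 h2
    rw [pv_eq α β hαβ]
    have h3 : |py α c / (α - β)| ≤ 1 / |α - β| := by
      rw [abs_div]
      exact (div_le_div_iff_of_pos_right hγ0).mpr h1
    nlinarith [neg_abs_le (py α c / (α - β))]
  have hAne : A₀.Nonempty := by
    obtain ⟨-, m, n, hm, hv1, hv2⟩ := exists_step hα (1 / |α - β|) (min L 1) (lt_min hL one_pos)
    refine ⟨(m, n), ⟨⟨?_, ?_⟩, ?_⟩⟩
    · have : -(min L 1) ≥ -L := by simp [min_le_left]
      simp only [py]; linarith [hv1, min_le_left L 1]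
    · simpa [py] using hv2
    · apply hpv_pos _ _ hm
      simp only [py]
      rw [abs_le]
      constructor <;> nlinarith [min_le_right L 1, hv1, hv2]
  have hBne : B₀.Nonempty := by
    obtain ⟨⟨m, n, hm, hv1, hv2⟩, -⟩ := exists_step hα (1 / |α - β|) (min L 1) (lt_min hL one_pos)
    refine ⟨(m, n), ⟨⟨?_, ?_⟩, ?_⟩⟩
    · simp only [py]; linarith
    · simp only [py]; linarith [min_le_left L 1]
    · apply hpv_pos _ _ hm
      simp only [py]
      rw [abs_le]
      constructor <;> nlinarith [min_le_right L 1, hv1, hv2]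
  -- a bounded-sublevel set of pv over either strip is finite
  have hfin : ∀ (P : Set (ℤ × ℤ)) (K : ℝ),
      (∀ c ∈ P, |py α c| ≤ L ∧ 0 < pv α β c ∧ pv α β c ≤ K) → P.Finite := by
    intro P K hP
    apply finite_of_bounded P (K + L / |α - β|) (L + |α| * (K + L / |α - β|))
    intro c hc
    obtain ⟨h1, h2, h3⟩ := hP c hc
    have hm : |(c.1 : ℝ)| ≤ K + L / |α - β| := by
      have he : (c.1 : ℝ) = pv α β c - py α c / (α - β) := by
        rw [pv_eq α β hαβ]; ring
      rw [he]
      have : |py α c / (α - β)| ≤ L / |α - β| := by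
        rw [abs_div]
        exact (div_le_div_iff_of_pos_right hγ0).mpr h1
      have h4 : |pv α β c| ≤ K := by rw [abs_of_pos h2]; exact h3
      calc |pv α β c - py α c / (α - β)| ≤ |pv α β c| + |py α c / (α - β)| := abs_sub _ _
        _ ≤ K + L / |α - β| := by linarith
    refine ⟨hm, ?_⟩
    have he : (c.2 : ℝ) = py α c + α * c.1 := by simp only [py]; ring
    rw [he]
    calc |py α c + α * c.1| ≤ |py α c| + |α * c.1| := abs_add_le _ _
      _ ≤ L + |α| * (K + L / |α - β|) := by
          rw [abs_mul]
          have := mul_le_mul_of_nonneg_left hm (abs_nonneg α)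
          linarith
  -- extract the minimizers with tie-breaking
  have hbdA : ∀ c ∈ A₀, |py α c| ≤ L := by
    rintro c ⟨⟨h1, h2⟩, -⟩; rw [abs_le]; constructor <;> linarith
  have hbdB : ∀ c ∈ B₀, |py α c| ≤ L := by
    rintro c ⟨⟨h1, h2⟩, -⟩; rw [abs_le]; constructor <;> linarith
  obtain ⟨cA, hcA⟩ := hAne
  obtain ⟨cB, hcB⟩ := hBne
  have hA1fin : (({c ∈ A₀ | pv α β c ≤ pv α β cA}) : Set (ℤ × ℤ)).Finite := by
    apply hfin _ (pv α β cA)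
    rintro c ⟨hc, hle⟩
    exact ⟨hbdA c hc, hc.2, hle⟩
  obtain ⟨a₁, ha₁mem, ha₁min⟩ := Set.exists_min_image _ (pv α β) hA1fin ⟨cA, hcA, le_refl _⟩
  set d₁ : ℝ := pv α β a₁ with hd₁
  have haMin : ∀ c ∈ A₀, d₁ ≤ pv α β c := by
    intro c hc
    rcases le_or_gt (pv α β c) (pv α β cA) with h | h
    · exact ha₁min c ⟨hc, h⟩
    · exact le_trans (ha₁min cA ⟨hcA, le_refl _⟩) h.le
  have hA2fin : (({c ∈ A₀ | pv α β c = d₁}) : Set (ℤ × ℤ)).Finite := by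
    apply hfin _ d₁
    rintro c ⟨hc, he⟩
    exact ⟨hbdA c hc, hc.2, he.le⟩
  obtain ⟨a, hamem, haTie⟩ :=
    Set.exists_max_image _ (py α) hA2fin ⟨a₁, ha₁mem.1, rfl⟩
  have haA : a ∈ A₀ := hamem.1
  have hapv : pv α β a = d₁ := hamem.2
  -- b : same for B₀, tie-break by minimal py
  have hB1fin : (({c ∈ B₀ | pv α β c ≤ pv α β cB}) : Set (ℤ × ℤ)).Finite := by
    apply hfin _ (pv α β cB)
    rintro c ⟨hc, hle⟩
    exact ⟨hbdB c hc, hc.2, hle⟩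
  obtain ⟨b₁, hb₁mem, hb₁min⟩ := Set.exists_min_image _ (pv α β) hB1fin ⟨cB, hcB, le_refl _⟩
  set d₂ : ℝ := pv α β b₁ with hd₂
  have hbMin : ∀ c ∈ B₀, d₂ ≤ pv α β c := by
    intro c hc
    rcases le_or_gt (pv α β c) (pv α β cB) with h | h
    · exact hb₁min c ⟨hc, h⟩
    · exact le_trans (hb₁min cB ⟨hcB, le_refl _⟩) h.le
  have hB2fin : (({c ∈ B₀ | pv α β c = d₂}) : Set (ℤ × ℤ)).Finite := by
    apply hfin _ d₂
    rintro c ⟨hc, he⟩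
    exact ⟨hbdB c hc, hc.2, he.le⟩
  obtain ⟨b, hbmem, hbTie⟩ :=
    Set.exists_min_image _ (py α) hB2fin ⟨b₁, hb₁mem.1, rfl⟩
  have hbB : b ∈ B₀ := hbmem.1
  have hbpv : pv α β b = d₂ := hbmem.2
  have hd₁pos : 0 < d₁ := hd₁ ▸ ha₁mem.1.2
  have hd₂pos : 0 < d₂ := hd₂ ▸ hb₁mem.1.2
  -- the two exchange lemmas
  have KB : ∀ c ∈ B₀, py α c < py α b → d₁ + d₂ ≤ pv α β c := by
    intro c hc hlt
    have h2 : d₂ ≤ pv α β c := hbMin c hc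
    have h3 : pv α β c ≠ d₂ := by
      intro h
      exact absurd (hbTie c ⟨hc, h⟩) (not_le.mpr hlt)
    by_contra hcon
    push_neg at hcon
    have heA : c - b ∈ A₀ := by
      refine ⟨⟨?_, ?_⟩, ?_⟩
      · rw [py_sub]; linarith [hc.1.1, hbB.1.2]
      · rw [py_sub]; linarith
      · rw [pv_sub, hbpv]
        exact sub_pos.mpr (lt_of_le_of_ne h2 (Ne.symm h3))
    have := haMin _ heA
    rw [pv_sub, hbpv] at this
    linarith
  have KA : ∀ c ∈ A₀, py α a < py α c → d₁ + d₂ ≤ pv α β c := by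
    intro c hc hlt
    have h2 : d₁ ≤ pv α β c := haMin c hc
    have h3 : pv α β c ≠ d₁ := by
      intro h
      exact absurd (haTie c ⟨hc, h⟩) (not_le.mpr hlt)
    by_contra hcon
    push_neg at hcon
    have heB : c - a ∈ B₀ := by
      refine ⟨⟨?_, ?_⟩, ?_⟩
      · rw [py_sub]; linarith
      · rw [py_sub]; linarith [hc.1.2, haA.1.1]
      · rw [pv_sub, hapv]
        exact sub_pos.mpr (lt_of_le_of_ne h2 (Ne.symm h3))
    have := hbMin _ heB
    rw [pv_sub, hapv] at this
    linarith
  refine ⟨d₁, d₂, hd₁pos, hd₂pos, ?_⟩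
  intro z hz
  set y : ℝ := projY α (fun i => ((z i : ℤ) : ℝ)) with hy
  have hzy : t ≤ y ∧ y < t + L := by
    rw [hS] at hz
    exact hz
  -- membership of a step in the gap set
  set U : Set ℝ := {u : ℝ | 0 < u ∧ ∃ w ∈ S,
      projV α β (fun i => (w i : ℝ)) = projV α β (fun i => (z i : ℝ)) + u} with hU
  have mem_of_step : ∀ c : ℤ × ℤ, t - y ≤ py α c → py α c < t + L - y → 0 < pv α β c →
      pv α β c ∈ U := by
    intro c h1 h2 h3
    refine ⟨h3, ![z 0 + c.1, z 1 + c.2], ?_, ?_⟩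
    · rw [hS]
      have heq : projY α (fun i => ((![z 0 + c.1, z 1 + c.2] : Fin 2 → ℤ) i : ℝ))
          = y + py α c := by
        simp [projY, py, hy, Matrix.cons_val_zero, Matrix.cons_val_one, Matrix.head_cons]
        push_cast
        ring
      simp only [Set.mem_setOf_eq, heq, Set.mem_Ico]
      constructor <;> linarith
    · simp only [projV, pv, Matrix.cons_val_zero, Matrix.cons_val_one, Matrix.head_cons]
      push_cast
      ring
  have step_of_mem : ∀ u ∈ U, ∃ c : ℤ × ℤ, pv α β c = u ∧
      t - y ≤ py α c ∧ py α c < t + L - y ∧ 0 < pv α β c := by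
    rintro u ⟨hu, w, hwS, hw⟩
    refine ⟨(w 0 - z 0, w 1 - z 1), ?_, ?_, ?_, ?_⟩
    · have : pv α β (w 0 - z 0, w 1 - z 1)
          = projV α β (fun i => (w i : ℝ)) - projV α β (fun i => (z i : ℝ)) := by
        simp only [pv, projV]
        push_cast
        ring
      rw [this, hw]; ring
    · have he : py α (w 0 - z 0, w 1 - z 1)
          = projY α (fun i => (w i : ℝ)) - y := by
        simp only [py, projY, hy]
        push_cast
        ring
      rw [hS] at hwS
      have := hwS.1
      rw [he]; linarith
    · have he : py α (w 0 - z 0, w 1 - z 1)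
          = projY α (fun i => (w i : ℝ)) - y := by
        simp only [py, projY, hy]
        push_cast
        ring
      rw [hS] at hwS
      have := hwS.2
      rw [he]; linarith
    · have : pv α β (w 0 - z 0, w 1 - z 1)
          = projV α β (fun i => (w i : ℝ)) - projV α β (fun i => (z i : ℝ)) := by
        simp only [pv, projV]
        push_cast
        ring
      rw [this, hw]; linarith
  -- classify any element of U
  have classify : ∀ u ∈ U, ∃ c : ℤ × ℤ, pv α β c = u ∧
      ((c ∈ A₀ ∧ t - y ≤ py α c) ∨ (c ∈ B₀ ∧ py α c < t + L - y)) := by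
    intro u hu
    obtain ⟨c, hcv, h1, h2, h3⟩ := step_of_mem u hu
    rcases lt_or_ge (py α c) 0 with hneg | hpos
    · refine ⟨c, hcv, Or.inl ⟨⟨⟨?_, hneg⟩, h3⟩, h1⟩⟩
      linarith [hzy.2]
    · refine ⟨c, hcv, Or.inr ⟨⟨⟨hpos, ?_⟩, h3⟩, h2⟩⟩
      linarith [hzy.1]
  by_cases hAok : t - y ≤ py α a
  · by_cases hBok : py α b < t + L - y
    · -- both available : gap is min d₁ d₂
      refine ⟨min d₁ d₂, ?_, ?_, ?_⟩
      · rcases min_cases d₁ d₂ with ⟨h, -⟩ | ⟨h, -⟩ <;> rw [h] <;> simp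
      · rcases le_total d₁ d₂ with h | h
        · rw [min_eq_left h, ← hapv]
          exact mem_of_step a hAok (by linarith [haA.1.2, hzy.2]) (hapv ▸ hd₁pos)
        · rw [min_eq_right h, ← hbpv]
          exact mem_of_step b (by linarith [hbB.1.1, hzy.1]) hBok (hbpv ▸ hd₂pos)
      · intro u hu
        obtain ⟨c, hcv, hc⟩ := classify u hu
        rcases hc with ⟨hc, -⟩ | ⟨hc, -⟩
        · exact le_trans (min_le_left _ _) (hcv ▸ haMin c hc)
        · exact le_trans (min_le_right _ _) (hcv ▸ hbMin c hc)
    · -- only a available : gap is d₁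
      push_neg at hBok
      refine ⟨d₁, by simp, ?_, ?_⟩
      · rw [← hapv]
        exact mem_of_step a hAok (by linarith [haA.1.2, hzy.2]) (hapv ▸ hd₁pos)
      · intro u hu
        obtain ⟨c, hcv, hc⟩ := classify u hu
        rcases hc with ⟨hc, -⟩ | ⟨hc, hlt⟩
        · exact hcv ▸ haMin c hc
        · have : d₁ + d₂ ≤ pv α β c := KB c hc (by linarith)
          linarith [hcv ▸ this]
  · push_neg at hAok
    by_cases hBok : py α b < t + L - y
    · -- only b available : gap is d₂
      refine ⟨d₂, by simp, ?_, ?_⟩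
      · rw [← hbpv]
        exact mem_of_step b (by linarith [hbB.1.1, hzy.1]) hBok (hbpv ▸ hd₂pos)
      · intro u hu
        obtain ⟨c, hcv, hc⟩ := classify u hu
        rcases hc with ⟨hc, hge⟩ | ⟨hc, -⟩
        · have : d₁ + d₂ ≤ pv α β c := KA c hc (by linarith)
          linarith [hcv ▸ this]
        · exact hcv ▸ hbMin c hc
    · -- neither : gap is d₁ + d₂ via the step a + b
      push_neg at hBok
      refine ⟨d₁ + d₂, by simp, ?_, ?_⟩
      · have h1 : t - y ≤ py α (a + b) := by
          rw [py_add]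
          linarith [haA.1.1, hBok]
        have h2 : py α (a + b) < t + L - y := by
          rw [py_add]
          linarith [hbB.1.2, hAok]
        have h3 : 0 < pv α β (a + b) := by
          rw [pv_add, hapv, hbpv]; linarith
        have := mem_of_step (a + b) h1 h2 h3
        rwa [pv_add, hapv, hbpv] at this
      · intro u hu
        obtain ⟨c, hcv, hc⟩ := classify u hu
        rcases hc with ⟨hc, hge⟩ | ⟨hc, hlt⟩
        · exact hcv ▸ KA c hc (by linarith)
        · exact hcv ▸ KB c hc (by linarith)
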